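/- Let f_{2k,α} be as above, and let α_{2k} = 1 − 2^{2k}/((2k+1)·C(2k,k)). Then: (i) f_{2k,α}(y) = −f_{2k,α}(1−y) for all y; (ii) if α > α_{2k}, then f'_{2k,α}(y) < 0 for all y ∈ [0,1], and consequently there exists c(2k,α) > 0 such that f_{2k,α}(y) − f_{2k,α}(y') ≤ −c(2k,α)(y−y') whenever 0 ≤ y' ≤ y ≤ 1. -/

import Mathlib

open Finset

/-- The limiting drift function of the `2k`-choices dynamics with node failures
on the complete graph, with failure probability `α`. -/
noncomputable def f2k (k : ℕ) (α y : ℝ) : ℝ :=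
  (α/2) * (1-2*y) + (1-α) * ∑ r ∈ Finset.Icc (k+1) (2*k),
    (Nat.choose (2*k) r : ℝ) * (y^r * (1-y)^(2*k-r+1) - (1-y)^r * y^(2*k-r+1))

lemma term_deriv (s m : ℕ) (y : ℝ) :
    HasDerivAt (fun y : ℝ => y^(s+1) * (1-y)^(m+1) - (1-y)^(s+1) * y^(m+1))
      (((s:ℝ)+1) * y^s * (1-y)^(m+1) - ((m:ℝ)+1) * y^(s+1) * (1-y)^m
       + (((s:ℝ)+1) * (1-y)^s * y^(m+1) - ((m:ℝ)+1) * (1-y)^(s+1) * y^m)) y := by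
  have h1 : HasDerivAt (fun y : ℝ => 1 - y) (-1) y := by
    simpa using (hasDerivAt_id y).const_sub 1
  have hp : ∀ n : ℕ, HasDerivAt (fun y : ℝ => (1-y)^n) (((n:ℝ) * (1-y)^(n-1)) * (-1)) y := by
    intro n
    simpa [Function.comp_def] using (hasDerivAt_pow n (1-y)).comp y h1
  have h := ((hasDerivAt_pow (s+1) y).mul (hp (m+1))).sub ((hp (s+1)).mul (hasDerivAt_pow (m+1) y))
  refine h.congr_deriv ?_
  simp only [Nat.add_sub_cancel]
  push_cast
  ring


lemma sum_deriv_eq (k : ℕ) (hk : 1 ≤ k) (y : ℝ) :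
    ∑ r ∈ Finset.Icc (k+1) (2*k), (Nat.choose (2*k) r : ℝ) *
      ((r:ℝ) * y^(r-1) * (1-y)^(2*k-r+1) - ((2*k-r+1 : ℕ):ℝ) * y^r * (1-y)^(2*k-r)
        + ((r:ℝ) * (1-y)^(r-1) * y^(2*k-r+1) - ((2*k-r+1 : ℕ):ℝ) * (1-y)^r * y^(2*k-r)))
    = (2*(k:ℝ)+1) * (Nat.choose (2*k) k : ℝ) * (y*(1-y))^k - 1 := by
  set A : ℕ → ℝ := fun r => (Nat.choose (2*k) r : ℝ) * r *
      (y^(r-1) * (1-y)^(2*k-r+1) + (1-y)^(r-1) * y^(2*k-r+1)) with hA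
  set g : ℕ → ℝ := fun r => (Nat.choose (2*k) r : ℝ) * y^r * (1-y)^(2*k-r) with hg
  set gg : ℕ → ℝ := fun r => (Nat.choose (2*k) r : ℝ) * (1-y)^r * y^(2*k-r) with hgg
  -- per-term identity
  have step1 : ∀ r ∈ Finset.Icc (k+1) (2*k), (Nat.choose (2*k) r : ℝ) *
      ((r:ℝ) * y^(r-1) * (1-y)^(2*k-r+1) - ((2*k-r+1 : ℕ):ℝ) * y^r * (1-y)^(2*k-r)
        + ((r:ℝ) * (1-y)^(r-1) * y^(2*k-r+1) - ((2*k-r+1 : ℕ):ℝ) * (1-y)^r * y^(2*k-r)))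
      = (A r - A (r+1)) - (g r + gg r) := by
    intro r hr
    simp only [Finset.mem_Icc] at hr
    have hr2 : r ≤ 2*k := hr.2
    have hcc : (Nat.choose (2*k) (r+1) : ℝ) * ((r:ℝ)+1)
        = (Nat.choose (2*k) r : ℝ) * ((2*k-r : ℕ) : ℝ) := by
      exact_mod_cast congrArg (Nat.cast : ℕ → ℝ) (Nat.choose_succ_right_eq (2*k) r)
    have e3 : ((2*k-r+1 : ℕ) : ℝ) = ((2*k-r : ℕ) : ℝ) + 1 := by push_cast; ring
    rcases eq_or_lt_of_le hr2 with rfl | hlt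
    · simp only [hA, hg, hgg, Nat.choose_eq_zero_of_lt (by omega : 2*k < 2*k+1),
        Nat.sub_self, Nat.choose_self, Nat.cast_zero, Nat.cast_one, pow_zero, e3]
      push_cast
      ring
    · have e1 : 2*k - (r+1) + 1 = 2*k - r := by omega
      have e2 : (r+1) - 1 = r := by omega
      simp only [hA, hg, hgg, e1, e2, e3]
      push_cast at hcc ⊢
      linear_combination (y^r * (1-y)^(2*k-r) + (1-y)^r * y^(2*k-r)) * hcc
  rw [Finset.sum_congr rfl step1, Finset.sum_sub_distrib, Finset.sum_add_distrib]
  -- telescoping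
  have htel : ∑ r ∈ Finset.Icc (k+1) (2*k), (A r - A (r+1)) = A (k+1) - A (2*k+1) := by
    rw [← Finset.Ico_add_one_right_eq_Icc, Finset.sum_Ico_eq_sum_range]
    have hn : 2*k + 1 - (k+1) = k := by omega
    rw [hn]
    have hsh : ∀ i, k+1+i+1 = k+1+(i+1) := fun i => by omega
    rw [Finset.sum_congr rfl (fun i _ => by rw [hsh i] :
        ∀ i ∈ Finset.range k, A (k+1+i) - A (k+1+i+1) = A (k+1+i) - A (k+1+(i+1))),
      Finset.sum_range_sub' (fun i => A (k+1+i)) k]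
    congr 2
    omega
  rw [htel]
  have hA2k1 : A (2*k+1) = 0 := by
    simp [hA, Nat.choose_eq_zero_of_lt (by omega : 2*k < 2*k+1)]
  have hA1 : A (k+1) = 2*(k:ℝ) * (Nat.choose (2*k) k : ℝ) * (y*(1-y))^k := by
    have hcc : (Nat.choose (2*k) (k+1) : ℝ) * ((k:ℝ)+1)
        = (Nat.choose (2*k) k : ℝ) * ((2*k-k : ℕ) : ℝ) := by
      exact_mod_cast congrArg (Nat.cast : ℕ → ℝ) (Nat.choose_succ_right_eq (2*k) k)
    have e4 : (2*k - k : ℕ) = k := by omega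
    rw [e4] at hcc
    have e1 : 2*k - (k+1) + 1 = k := by omega
    have e2 : (k+1) - 1 = k := by omega
    simp only [hA, e1, e2]
    push_cast at hcc ⊢
    rw [mul_pow]
    linear_combination (y^k * (1-y)^k + (1-y)^k * y^k) * hcc
  -- binomial theorem
  have hbin : ∑ r ∈ Finset.range (2*k+1), g r = 1 := by
    calc ∑ r ∈ Finset.range (2*k+1), g r
        = (y + (1-y))^(2*k) := by
          rw [add_pow]
          exact Finset.sum_congr rfl fun r _ => by simp only [hg]; ring
      _ = 1 := by norm_num
  have hsplit : ∑ r ∈ Finset.Icc (k+1) (2*k), g r = 1 - ∑ r ∈ Finset.range (k+1), g r := by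
    have h := Finset.sum_Ico_consecutive g (Nat.zero_le (k+1)) (by omega : k+1 ≤ 2*k+1)
    rw [← Finset.range_eq_Ico, Finset.Ico_add_one_right_eq_Icc, ← Finset.range_eq_Ico] at h
    linarith [h, hbin]
  have hrefl : ∑ r ∈ Finset.Icc (k+1) (2*k), gg r = ∑ r ∈ Finset.range k, g r := by
    apply Finset.sum_nbij' (i := fun r => 2*k - r) (j := fun r => 2*k - r)
    · intro a ha; simp only [Finset.mem_Icc] at ha; simp only [Finset.mem_range]; omega
    · intro a ha; simp only [Finset.mem_range] at ha; simp only [Finset.mem_Icc]; omega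
    · intro a ha; simp only [Finset.mem_Icc] at ha; omega
    · intro a ha; simp only [Finset.mem_range] at ha; omega
    · intro a ha
      simp only [Finset.mem_Icc] at ha
      simp only [hg, hgg]
      rw [Nat.choose_symm ha.2, show 2*k - (2*k - a) = a by omega]
      ring
  have hrange : ∑ r ∈ Finset.range (k+1), g r = ∑ r ∈ Finset.range k, g r + g k :=
    Finset.sum_range_succ g k
  have hgk : g k = (Nat.choose (2*k) k : ℝ) * (y*(1-y))^k := by
    simp only [hg, show 2*k - k = k by omega]
    rw [mul_pow]; ring
  rw [hA2k1, hsplit, hrefl]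
  rw [hrange] at *
  rw [hA1, hgk]
  ring

lemma f2k_hasDerivAt (k : ℕ) (α y : ℝ) :
    HasDerivAt (f2k k α)
      (-α + (1-α) * ∑ r ∈ Finset.Icc (k+1) (2*k), (Nat.choose (2*k) r : ℝ) *
        ((r:ℝ) * y^(r-1) * (1-y)^(2*k-r+1) - ((2*k-r+1 : ℕ):ℝ) * y^r * (1-y)^(2*k-r)
          + ((r:ℝ) * (1-y)^(r-1) * y^(2*k-r+1) - ((2*k-r+1 : ℕ):ℝ) * (1-y)^r * y^(2*k-r)))) y := by
  have hlin : HasDerivAt (fun y : ℝ => (α/2) * (1-2*y)) (-α) y := by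
    have h : HasDerivAt (fun y : ℝ => 1-2*y) (-2) y := by
      simpa using ((hasDerivAt_id y).const_mul 2).const_sub 1
    have := h.const_mul (α/2)
    refine this.congr_deriv ?_
    ring
  have hsum : HasDerivAt (fun y : ℝ => ∑ r ∈ Finset.Icc (k+1) (2*k),
      (Nat.choose (2*k) r : ℝ) * (y^r * (1-y)^(2*k-r+1) - (1-y)^r * y^(2*k-r+1)))
      (∑ r ∈ Finset.Icc (k+1) (2*k), (Nat.choose (2*k) r : ℝ) *
        ((r:ℝ) * y^(r-1) * (1-y)^(2*k-r+1) - ((2*k-r+1 : ℕ):ℝ) * y^r * (1-y)^(2*k-r)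
          + ((r:ℝ) * (1-y)^(r-1) * y^(2*k-r+1) - ((2*k-r+1 : ℕ):ℝ) * (1-y)^r * y^(2*k-r)))) y := by
    apply HasDerivAt.fun_sum
    intro r hr
    simp only [Finset.mem_Icc] at hr
    obtain ⟨s, rfl⟩ : ∃ s, r = s + 1 := ⟨r - 1, by omega⟩
    have h := (term_deriv s (2*k - (s+1)) y).const_mul (Nat.choose (2*k) (s+1) : ℝ)
    refine h.congr_deriv ?_
    have e2 : (s+1) - 1 = s := by omega
    rw [e2]
    push_cast
    ring
  exact hlin.add (hsum.const_mul (1-α))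

/-- **Properties of the `2k`-choices drift function.**
(i) antisymmetry about `1/2`; (ii) above the threshold
`α_{2k} = 1 − 2^{2k}/((2k+1) C(2k,k))`, the derivative of `f_{2k,α}` is negative
on `[0,1]`, and hence `f_{2k,α}` contracts at a uniform linear rate. -/
theorem stmt_19 (k : ℕ) (hk : 1 ≤ k) (α : ℝ) (hα : α ∈ Set.Ioo (0:ℝ) 1)
    (α2k : ℝ)
    (hα2k : α2k = 1 - 2^(2*k) / ((2*(k:ℝ)+1) * (Nat.choose (2*k) k : ℝ))) :
    (∀ y : ℝ, f2k k α y = - f2k k α (1-y)) ∧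
    (α2k < α →
      (∀ y ∈ Set.Icc (0:ℝ) 1, deriv (f2k k α) y < 0) ∧
      ∃ c : ℝ, 0 < c ∧ ∀ y' y : ℝ, 0 ≤ y' → y' ≤ y → y ≤ 1 →
        f2k k α y - f2k k α y' ≤ -c * (y - y')) := by
  obtain ⟨hα0, hα1⟩ := hα
  -- the derivative in closed form
  have hD : ∀ y : ℝ, HasDerivAt (f2k k α)
      (-1 + (1-α) * ((2*(k:ℝ)+1) * (Nat.choose (2*k) k : ℝ) * (y*(1-y))^k)) y := by
    intro y
    have h := f2k_hasDerivAt k α y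
    rw [sum_deriv_eq k hk y] at h
    convert h using 1
    ring
  constructor
  · -- antisymmetry
    intro y
    have key : f2k k α (1-y) = - f2k k α y := by
      simp only [f2k]
      have hs : ∑ r ∈ Finset.Icc (k+1) (2*k), (Nat.choose (2*k) r : ℝ) *
          ((1-y)^r * (1-(1-y))^(2*k-r+1) - (1-(1-y))^r * (1-y)^(2*k-r+1))
          = ∑ r ∈ Finset.Icc (k+1) (2*k), -((Nat.choose (2*k) r : ℝ) *
          (y^r * (1-y)^(2*k-r+1) - (1-y)^r * y^(2*k-r+1))) := by
        refine Finset.sum_congr rfl fun r _ => ?_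
        rw [show (1:ℝ) - (1-y) = y from by ring]
        ring
      rw [hs, Finset.sum_neg_distrib]
      ring
    rw [key, neg_neg]
  · intro hlt
    set C : ℝ := (Nat.choose (2*k) k : ℝ) with hC
    have hCpos : (0:ℝ) < C := by
      rw [hC]; exact_mod_cast Nat.choose_pos (by omega : k ≤ 2*k)
    set M : ℝ := (2*(k:ℝ)+1) * C with hM
    have hMpos : 0 < M := by positivity
    have hfour : (2:ℝ)^(2*k) = 4^k := by rw [pow_mul]; norm_num
    have h4k : (0:ℝ) < 4^k := by positivity
    -- (1-α) M (1/4)^k < 1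
    have h1 : (1-α)*M < 4^k := by
      rw [hα2k, hfour] at hlt
      have h2 : 1 - α < 4^k / M := by linarith
      calc (1-α)*M < (4^k / M) * M := by exact mul_lt_mul_of_pos_right h2 hMpos
        _ = 4^k := by field_simp
    set c : ℝ := 1 - (1-α) * (M * (1/4:ℝ)^k) with hc
    have hcpos : 0 < c := by
      rw [hc]
      have : (1-α) * (M * (1/4:ℝ)^k) = ((1-α)*M) / 4^k := by
        rw [div_pow, one_pow]; field_simp
      rw [this]
      have := (div_lt_one h4k).mpr h1
      linarith
    -- uniform derivative bound on [0,1]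
    have hbound : ∀ y ∈ Set.Icc (0:ℝ) 1,
        -1 + (1-α) * (M * (y*(1-y))^k) ≤ -c := by
      intro y hy
      obtain ⟨hy0, hy1⟩ := hy
      have h01 : 0 ≤ y*(1-y) := mul_nonneg hy0 (by linarith)
      have h14 : y*(1-y) ≤ 1/4 := by nlinarith [sq_nonneg (y - 1/2)]
      have hpk : (y*(1-y))^k ≤ ((1:ℝ)/4)^k := pow_le_pow_left₀ h01 h14 k
      have h2 : (1-α) * (M * (y*(1-y))^k) ≤ (1-α) * (M * (1/4:ℝ)^k) := by
        apply mul_le_mul_of_nonneg_left _ (by linarith : (0:ℝ) ≤ 1-α)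
        exact mul_le_mul_of_nonneg_left hpk hMpos.le
      rw [hc]; linarith
    have hDs : ∀ y : ℝ, HasDerivAt (f2k k α) (-1 + (1-α) * (M * (y*(1-y))^k)) y := hD
    constructor
    · intro y hy
      rw [(hDs y).deriv]
      have := hbound y hy
      linarith
    · refine ⟨c, hcpos, ?_⟩
      set gfun : ℝ → ℝ := fun y => f2k k α y + c*y with hgfun
      have hg : ∀ y : ℝ, HasDerivAt gfun ((-1 + (1-α) * (M * (y*(1-y))^k)) + c) y := by
        intro y
        exact (hDs y).add (by simpa using (hasDerivAt_id y).const_mul c)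
      have hdiff : Differentiable ℝ gfun := fun y => (hg y).differentiableAt
      have hanti : AntitoneOn gfun (Set.Icc 0 1) := by
        apply antitoneOn_of_deriv_nonpos (convex_Icc 0 1)
          hdiff.continuous.continuousOn hdiff.differentiableOn
        intro x hx
        rw [interior_Icc] at hx
        rw [(hg x).deriv]
        have := hbound x ⟨hx.1.le, hx.2.le⟩
        linarith
      intro y' y hy0 hyy hy1
      have h := hanti (Set.mem_Icc.mpr ⟨hy0, hyy.trans hy1⟩)
        (Set.mem_Icc.mpr ⟨hy0.trans hyy, hy1⟩) hyy
      simp only [hgfun] at h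
      linarith
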